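/- Let m₁ ≥ 1 and m₂ ≥ 2 be natural numbers, let S, T be positive definite Hermitian n×n complex matrices and X any n×n complex matrix. Then, with ‖·‖_F the Frobenius norm: ‖(1/m₁)Σ_{k=1}^{m₁} S^{k/(m₁+1)} X T^{(m₁+1−k)/(m₁+1)}‖_F ≤ ‖(1/m₁)Σ_{k=1}^{m₁} S^{(2k−1)/(2m₁)} X T^{(2m₁−2k+1)/(2m₁)}‖_F ≤ ‖∫₀¹ S^ν X T^{1−ν} dν‖_F ≤ ‖(1/m₂)(Σ_{k=0}^{m₂} S^{k/m₂} X T^{(m₂−k)/m₂} − (SX + XT)/2)‖_F ≤ ‖(1/m₂)Σ_{k=0}^{m₂−1} S^{k/(m₂−1)} X T^{(m₂−1−k)/(m₂−1)}‖_F. -/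

import Mathlib

open scoped ComplexOrder

/-- The matrix power `S^ν` of a Hermitian matrix, defined by applying `x ↦ x ^ ν` to the
eigenvalues in a spectral decomposition (continuous functional calculus). -/
noncomputable def matPow {n : ℕ} (S : Matrix (Fin n) (Fin n) ℂ) (hS : S.IsHermitian)
    (ν : ℝ) : Matrix (Fin n) (Fin n) ℂ :=
  (hS.eigenvectorUnitary : Matrix (Fin n) (Fin n) ℂ) *
    Matrix.diagonal (fun i => ((hS.eigenvalues i ^ ν : ℝ) : ℂ)) *
    (star hS.eigenvectorUnitary : Matrix (Fin n) (Fin n) ℂ)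

/-- `N` is a unitarily invariant norm on `n × n` complex matrices. -/
def UnitarilyInvariantNorm {n : ℕ} (N : Matrix (Fin n) (Fin n) ℂ → ℝ) : Prop :=
  (∀ A, 0 ≤ N A) ∧
  (∀ A B, N (A + B) ≤ N A + N B) ∧
  (∀ (c : ℂ) (A), N (c • A) = ‖c‖ * N A) ∧
  (∀ U V : Matrix (Fin n) (Fin n) ℂ, U ∈ Matrix.unitaryGroup (Fin n) ℂ →
    V ∈ Matrix.unitaryGroup (Fin n) ℂ → ∀ A, N (U * A * V) = N A)
attribute [local instance] Matrix.frobeniusNormedAddCommGroup Matrix.frobeniusNormedSpace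

/-- The Frobenius norm. -/
noncomputable def frobNorm {n : ℕ} (A : Matrix (Fin n) (Fin n) ℂ) : ℝ :=
  Real.sqrt (∑ i, ∑ j, ‖A i j‖ ^ 2)


open Real
open Matrix
section helperdev

noncomputable def gfun (a b ν : ℝ) : ℝ := a ^ ν * b ^ (1 - ν)

lemma gfun_pos {a b : ℝ} (ha : 0 < a) (hb : 0 < b) (ν : ℝ) : 0 < gfun a b ν :=
  mul_pos (rpow_pos_of_pos ha ν) (rpow_pos_of_pos hb _)

lemma gfun_cont {a b : ℝ} (ha : 0 < a) (hb : 0 < b) : Continuous (gfun a b) := by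
  have : gfun a b = fun ν => Real.exp (Real.log a * ν) * Real.exp (Real.log b * (1 - ν)) := by
    funext ν
    rw [gfun, rpow_def_of_pos ha, rpow_def_of_pos hb]
  rw [this]; fun_prop

lemma gfun_one {a b : ℝ} (ha : 0 < a) : gfun a b 1 = a := by
  simp [gfun, rpow_one]

lemma gfun_zero {a b : ℝ} (hb : 0 < b) : gfun a b 0 = b := by
  simp [gfun]

-- cosh monotonicity for t ≥ 1
private lemma cosh_aux {t u v : ℝ} (ht : 1 ≤ t) (hu : 0 ≤ u) (huv : u ≤ v) :
    t ^ u + t ^ (-u) ≤ t ^ v + t ^ (-v) := by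
  have ht0 : 0 < t := lt_of_lt_of_le one_pos ht
  have h1 : t ^ u ≤ t ^ v := rpow_le_rpow_of_exponent_le ht huv
  have h2 : t ^ (-u) - t ^ (-v) = t ^ (-(u+v)) * (t ^ v - t ^ u) := by
    rw [mul_sub, ← rpow_add ht0, ← rpow_add ht0]; ring_nf
  have h3 : t ^ (-(u+v)) ≤ 1 := rpow_le_one_of_one_le_of_nonpos ht (by linarith)
  have h4 := mul_le_of_le_one_left (sub_nonneg.2 h1) h3
  linarith

lemma cosh_mono {t u v : ℝ} (ht : 0 < t) (hu : 0 ≤ u) (huv : u ≤ v) :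
    t ^ u + t ^ (-u) ≤ t ^ v + t ^ (-v) := by
  rcases le_or_gt 1 t with h | h
  · exact cosh_aux h hu huv
  · have ht1 : 1 ≤ t⁻¹ := by rw [le_inv_comm₀ one_pos ht]; simpa using h.le
    have := cosh_aux ht1 hu huv
    rw [inv_rpow ht.le, inv_rpow ht.le, inv_rpow ht.le, inv_rpow ht.le,
      ← rpow_neg ht.le, ← rpow_neg ht.le, ← rpow_neg ht.le, ← rpow_neg ht.le] at this
    simp only [neg_neg] at this
    linarith

lemma gfun_shift {a b : ℝ} (ha : 0 < a) (hb : 0 < b) (c u : ℝ) :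
    gfun a b (c + u) = gfun a b c * (a / b) ^ u := by
  rw [gfun, gfun, rpow_add ha, show 1 - (c + u) = (1 - c) + (-u) by ring, rpow_add hb,
    div_rpow ha.le hb.le, rpow_neg hb.le]
  field_simp

lemma pair_mono_abs {a b : ℝ} (ha : 0 < a) (hb : 0 < b) (c : ℝ) {u v : ℝ}
    (hu : 0 ≤ u) (huv : u ≤ v) :
    gfun a b (c + u) + gfun a b (c - u) ≤ gfun a b (c + v) + gfun a b (c - v) := by
  have hgc := gfun_pos ha hb c
  have ht : 0 < a / b := div_pos ha hb
  have key := cosh_mono (t := a / b) ht hu huv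
  have e : ∀ w : ℝ, gfun a b (c + w) + gfun a b (c - w)
      = gfun a b c * ((a/b) ^ w + (a/b) ^ (-w)) := by
    intro w
    rw [show c - w = c + (-w) by ring, gfun_shift ha hb, gfun_shift ha hb]
    ring
  rw [e u, e v]
  exact mul_le_mul_of_nonneg_left key hgc.le

lemma pair_refl {a b : ℝ} (c u : ℝ) :
    gfun a b (c + u) + gfun a b (c - u) = gfun a b (c + |u|) + gfun a b (c - |u|) := by
  rcases abs_cases u with ⟨h, _⟩ | ⟨h, _⟩
  · rw [h]
  · rw [h, show c + -u = c - u by ring, show c - -u = c + u by ring]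
    exact add_comm _ _

lemma pair_mono {a b : ℝ} (ha : 0 < a) (hb : 0 < b) (c : ℝ) {u v : ℝ} (h : |u| ≤ |v|) :
    gfun a b (c + u) + gfun a b (c - u) ≤ gfun a b (c + v) + gfun a b (c - v) := by
  rw [pair_refl c u, pair_refl c v]
  exact pair_mono_abs ha hb c (abs_nonneg u) h

lemma conv_combo {a b : ℝ} (ha : 0 < a) (hb : 0 < b) {p q θ₁ θ₂ : ℝ}
    (h1 : 0 ≤ θ₁) (h2 : 0 ≤ θ₂) (h12 : θ₁ + θ₂ = 1) :
    gfun a b (θ₁ * p + θ₂ * q) ≤ θ₁ * gfun a b p + θ₂ * gfun a b q := by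
  have e : ∀ x : ℝ, gfun a b x = Real.exp (x * Real.log a + (1 - x) * Real.log b) := by
    intro x
    rw [gfun, rpow_def_of_pos ha, rpow_def_of_pos hb, ← Real.exp_add]
    ring_nf
  rw [e, e, e]
  have := convexOn_exp.2 (Set.mem_univ (p * Real.log a + (1 - p) * Real.log b))
    (Set.mem_univ (q * Real.log a + (1 - q) * Real.log b)) h1 h2 h12
  simp only [smul_eq_mul] at this
  convert this using 2
  · exact rfl
  have : θ₂ = 1 - θ₁ := by linarith
  subst this
  ring

lemma gfun_eq {a b x y : ℝ} (h : x + y = 1) : a ^ x * b ^ y = gfun a b x := by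
  rw [gfun, show (1:ℝ) - x = y by linarith]
lemma gfun_fold {a b : ℝ} (ha : 0 < a) (hb : 0 < b) (c h : ℝ) :
    ∫ ν in (c - h)..(c + h), gfun a b ν
      = ∫ u in (0:ℝ)..h, (gfun a b (c + u) + gfun a b (c - u)) := by
  have hc : Continuous (gfun a b) := gfun_cont ha hb
  have k1 : Continuous fun u : ℝ => gfun a b (c + u) := hc.comp (by continuity)
  have k2 : Continuous fun u : ℝ => gfun a b (c - u) := hc.comp (by continuity)
  have h1 : ∫ u in (-h)..h, gfun a b (c + u) = ∫ ν in (c - h)..(c + h), gfun a b ν := by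
    rw [intervalIntegral.integral_comp_add_left (gfun a b) c]
    try rw [show c + -h = c - h by ring]
  have h2 : ∫ u in (0:ℝ)..h, gfun a b (c - u) = ∫ u in (-h)..(0:ℝ), gfun a b (c + u) := by
    have := intervalIntegral.integral_comp_neg (a := (0:ℝ)) (b := h) (fun u => gfun a b (c + u))
    simp only [neg_zero] at this
    calc ∫ u in (0:ℝ)..h, gfun a b (c - u)
        = ∫ u in (0:ℝ)..h, (fun u => gfun a b (c + u)) (-u) := by
          first
          | rfl
          | (congr 1; funext u; simp only [show c + -u = c - u from by ring])
      _ = ∫ u in (-h)..(0:ℝ), gfun a b (c + u) := this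
  have hadd : (∫ u in (-h)..(0:ℝ), gfun a b (c + u)) + (∫ u in (0:ℝ)..h, gfun a b (c + u))
      = ∫ u in (-h)..h, gfun a b (c + u) := by
    exact intervalIntegral.integral_add_adjacent_intervals
      (k1.intervalIntegrable _ _) (k1.intervalIntegrable _ _)
  calc ∫ ν in (c - h)..(c + h), gfun a b ν
      = ∫ u in (-h)..h, gfun a b (c + u) := h1.symm
    _ = (∫ u in (-h)..(0:ℝ), gfun a b (c + u)) + (∫ u in (0:ℝ)..h, gfun a b (c + u)) := hadd.symm
    _ = (∫ u in (0:ℝ)..h, gfun a b (c + u)) + (∫ u in (0:ℝ)..h, gfun a b (c - u)) := by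
        rw [h2]; exact add_comm _ _
    _ = ∫ u in (0:ℝ)..h, (gfun a b (c + u) + gfun a b (c - u)) := by
        exact (intervalIntegral.integral_add (k1.intervalIntegrable _ _)
          (k2.intervalIntegrable _ _)).symm

lemma gfun_mid_le {a b : ℝ} (ha : 0 < a) (hb : 0 < b) {c h : ℝ} (hh : 0 ≤ h) :
    2 * h * gfun a b c ≤ ∫ ν in (c - h)..(c + h), gfun a b ν := by
  rw [gfun_fold ha hb]
  have hc : Continuous (gfun a b) := gfun_cont ha hb
  have k1 : Continuous fun u : ℝ => gfun a b (c + u) := hc.comp (by continuity)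
  have k2 : Continuous fun u : ℝ => gfun a b (c - u) := hc.comp (by continuity)
  calc 2 * h * gfun a b c = ∫ _ in (0:ℝ)..h, (2 * gfun a b c) := by
        rw [intervalIntegral.integral_const, smul_eq_mul]; ring
    _ ≤ ∫ u in (0:ℝ)..h, (gfun a b (c + u) + gfun a b (c - u)) := by
        apply intervalIntegral.integral_mono_on hh
          (intervalIntegrable_const)
          ((k1.add k2).intervalIntegrable _ _)
        intro x hx
        have := pair_mono ha hb c (u := 0) (v := x)
          (by simpa using abs_nonneg x)
        simp only [add_zero, sub_zero] at this
        simp only [Pi.add_apply]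
        linarith

lemma gfun_le_trap {a b : ℝ} (ha : 0 < a) (hb : 0 < b) {c h : ℝ} (hh : 0 ≤ h) :
    (∫ ν in (c - h)..(c + h), gfun a b ν) ≤ h * (gfun a b (c - h) + gfun a b (c + h)) := by
  rw [gfun_fold ha hb]
  have hc : Continuous (gfun a b) := gfun_cont ha hb
  have k1 : Continuous fun u : ℝ => gfun a b (c + u) := hc.comp (by continuity)
  have k2 : Continuous fun u : ℝ => gfun a b (c - u) := hc.comp (by continuity)
  calc (∫ u in (0:ℝ)..h, (gfun a b (c + u) + gfun a b (c - u)))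
      ≤ ∫ _ in (0:ℝ)..h, (gfun a b (c + h) + gfun a b (c - h)) := by
        apply intervalIntegral.integral_mono_on hh
          ((k1.add k2).intervalIntegrable _ _)
          (intervalIntegrable_const)
        intro x hx
        apply pair_mono ha hb c
        rw [abs_of_nonneg hx.1, abs_of_nonneg hh]
        exact hx.2
    _ = h * (gfun a b (c - h) + gfun a b (c + h)) := by
        rw [intervalIntegral.integral_const, smul_eq_mul]; ring
-- pairing a at distance within [0,1] bounded by endpoints
lemma gfun_pair_endpoints {a b : ℝ} (ha : 0 < a) (hb : 0 < b) {x : ℝ}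
    (h0 : 0 ≤ x) (h1 : x ≤ 1) :
    gfun a b x + gfun a b (1 - x) ≤ a + b := by
  have := pair_mono ha hb (1/2 : ℝ) (u := x - 1/2) (v := (1:ℝ)/2)
    (by rw [abs_of_nonneg (by norm_num : (0:ℝ) ≤ (1:ℝ)/2)]; rw [abs_le]; constructor <;> linarith)
  rw [show (1:ℝ)/2 + (x - 1/2) = x by ring, show (1:ℝ)/2 - (x - 1/2) = 1 - x by ring,
    show (1:ℝ)/2 + 1/2 = 1 by ring, show (1:ℝ)/2 - 1/2 = 0 by ring, gfun_one ha, gfun_zero hb]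
    at this
  exact this

lemma scalar1 {a b : ℝ} (ha : 0 < a) (hb : 0 < b) (m : ℕ) (hm : 1 ≤ m) :
    ∑ k ∈ Finset.Icc 1 m, gfun a b ((k : ℝ) / ((m : ℝ) + 1))
      ≤ ∑ k ∈ Finset.Icc 1 m, gfun a b ((2 * (k : ℝ) - 1) / (2 * (m : ℝ))) := by
  have hmR : (1:ℝ) ≤ (m:ℝ) := by exact_mod_cast hm
  -- convert to range sums
  rw [← Finset.Ico_add_one_right_eq_Icc, Finset.sum_Ico_eq_sum_range, Finset.sum_Ico_eq_sum_range]
  simp only [Nat.add_sub_cancel]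
  set F : ℕ → ℝ := fun i => gfun a b (((1 + i : ℕ) : ℝ) / ((m : ℝ) + 1)) with hF
  set Q : ℕ → ℝ := fun i => gfun a b ((2 * ((1 + i : ℕ) : ℝ) - 1) / (2 * (m : ℝ))) with hQ
  show ∑ i ∈ Finset.range m, F i ≤ ∑ i ∈ Finset.range m, Q i
  have hrefF : ∑ i ∈ Finset.range m, F (m - 1 - i) = ∑ i ∈ Finset.range m, F i :=
    Finset.sum_range_reflect F m
  have hrefQ : ∑ i ∈ Finset.range m, Q (m - 1 - i) = ∑ i ∈ Finset.range m, Q i :=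
    Finset.sum_range_reflect Q m
  have key : ∀ i ∈ Finset.range m, F i + F (m - 1 - i) ≤ Q i + Q (m - 1 - i) := by
    intro i hi
    rw [Finset.mem_range] at hi
    have hc1 : ((1 + (m - 1 - i) : ℕ) : ℝ) = (m : ℝ) - (i : ℝ) := by
      have : 1 + (m - 1 - i) = m - i := by omega
      rw [this, Nat.cast_sub (by omega)]
    have hiR : (i : ℝ) ≤ (m : ℝ) - 1 := by
      have : (i : ℝ) + 1 ≤ (m : ℝ) := by exact_mod_cast Nat.succ_le_of_lt hi
      linarith
    have hiR0 : (0:ℝ) ≤ (i : ℝ) := Nat.cast_nonneg i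
    simp only [hF, hQ]
    rw [hc1]
    push_cast
    have e1 : (1 + (i:ℝ)) / ((m:ℝ) + 1) = 1/2 + ((2*(i:ℝ) + 1 - (m:ℝ)) / (2*((m:ℝ)+1))) := by
      field_simp; ring
    have e2 : ((m:ℝ) - (i:ℝ)) / ((m:ℝ) + 1) = 1/2 - ((2*(i:ℝ) + 1 - (m:ℝ)) / (2*((m:ℝ)+1))) := by
      field_simp; ring
    have e3 : (2 * (1 + (i:ℝ)) - 1) / (2 * (m:ℝ)) = 1/2 + ((2*(i:ℝ) + 1 - (m:ℝ)) / (2*(m:ℝ))) := by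
      field_simp; ring
    have e4 : (2 * ((m:ℝ) - (i:ℝ)) - 1) / (2 * (m:ℝ)) = 1/2 - ((2*(i:ℝ) + 1 - (m:ℝ)) / (2*(m:ℝ))) := by
      field_simp; ring
    rw [e1, e2, e3, e4]
    apply pair_mono ha hb
    rw [abs_div, abs_div]
    have d1 : |2*((m:ℝ)+1)| = 2*((m:ℝ)+1) := abs_of_pos (by linarith)
    have d2 : |2*(m:ℝ)| = 2*(m:ℝ) := abs_of_pos (by linarith)
    rw [d1, d2]
    apply div_le_div_of_nonneg_left (abs_nonneg _) (by linarith) (by linarith)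
  have hsum := Finset.sum_le_sum key
  rw [Finset.sum_add_distrib, Finset.sum_add_distrib, hrefF, hrefQ] at hsum
  linarith

lemma adjacent_split {a b : ℝ} (ha : 0 < a) (hb : 0 < b) (m : ℕ) (hm : 1 ≤ m) :
    ∑ k ∈ Finset.range m, ∫ ν in ((k:ℝ)/(m:ℝ))..(((k:ℝ)+1)/(m:ℝ)), gfun a b ν
      = ∫ ν in (0:ℝ)..1, gfun a b ν := by
  have hM0 : (0:ℝ) < (m:ℝ) := by exact_mod_cast hm
  have h := intervalIntegral.sum_integral_adjacent_intervals
    (μ := MeasureTheory.volume) (a := fun k : ℕ => (k:ℝ)/(m:ℝ)) (n := m)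
    (fun k _ => (gfun_cont ha hb).intervalIntegrable _ _)
  simp only [Nat.cast_zero, Nat.cast_add, Nat.cast_one, zero_div] at h
  rw [div_self hM0.ne'] at h
  exact h

lemma scalar2 {a b : ℝ} (ha : 0 < a) (hb : 0 < b) (m : ℕ) (hm : 1 ≤ m) :
    (1/(m:ℝ)) * ∑ k ∈ Finset.Icc 1 m, gfun a b ((2 * (k : ℝ) - 1) / (2 * (m : ℝ)))
      ≤ ∫ ν in (0:ℝ)..1, gfun a b ν := by
  have hM0 : (0:ℝ) < (m:ℝ) := by exact_mod_cast hm
  rw [← Finset.Ico_add_one_right_eq_Icc, Finset.sum_Ico_eq_sum_range]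
  simp only [Nat.add_sub_cancel]
  rw [Finset.mul_sum, ← adjacent_split ha hb m hm]
  apply Finset.sum_le_sum
  intro i _
  have key := gfun_mid_le ha hb (a := a) (b := b)
    (c := (2*(i:ℝ)+1)/(2*(m:ℝ))) (h := 1/(2*(m:ℝ))) (by positivity)
  have eL : (2*(i:ℝ)+1)/(2*(m:ℝ)) - 1/(2*(m:ℝ)) = (i:ℝ)/(m:ℝ) := by field_simp; ring
  have eR : (2*(i:ℝ)+1)/(2*(m:ℝ)) + 1/(2*(m:ℝ)) = ((i:ℝ)+1)/(m:ℝ) := by field_simp; ring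
  rw [eL, eR] at key
  calc 1/(m:ℝ) * gfun a b ((2 * ((1 + i : ℕ) : ℝ) - 1) / (2 * (m:ℝ)))
      = 2 * (1/(2*(m:ℝ))) * gfun a b ((2*(i:ℝ)+1)/(2*(m:ℝ))) := by
        push_cast
        rw [show 2 * (1 + (i:ℝ)) - 1 = 2*(i:ℝ)+1 by ring]
        field_simp
    _ ≤ _ := key

lemma scalar3 {a b : ℝ} (ha : 0 < a) (hb : 0 < b) (m : ℕ) (hm : 1 ≤ m) :
    (∫ ν in (0:ℝ)..1, gfun a b ν)
      ≤ (1/(m:ℝ)) * ((∑ k ∈ Finset.range (m+1), gfun a b ((k:ℝ)/(m:ℝ))) - (a+b)/2) := by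
  have hM0 : (0:ℝ) < (m:ℝ) := by exact_mod_cast hm
  have S1 : ∑ k ∈ Finset.range (m+1), gfun a b ((k:ℝ)/(m:ℝ))
      = (∑ k ∈ Finset.range m, gfun a b ((k:ℝ)/(m:ℝ))) + a := by
    rw [Finset.sum_range_succ, div_self hM0.ne', gfun_one ha]
  have S2 : ∑ k ∈ Finset.range (m+1), gfun a b ((k:ℝ)/(m:ℝ))
      = (∑ k ∈ Finset.range m, gfun a b ((((k:ℕ):ℝ)+1)/(m:ℝ))) + b := by
    rw [Finset.sum_range_succ' (fun k : ℕ => gfun a b ((k:ℝ)/(m:ℝ))) m]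
    push_cast
    rw [zero_div, gfun_zero hb]
  have key : (∫ ν in (0:ℝ)..1, gfun a b ν)
      ≤ ∑ i ∈ Finset.range m,
        (1/(2*(m:ℝ))) * (gfun a b ((i:ℝ)/(m:ℝ)) + gfun a b (((i:ℝ)+1)/(m:ℝ))) := by
    rw [← adjacent_split ha hb m hm]
    apply Finset.sum_le_sum
    intro i _
    have key := gfun_le_trap ha hb (a := a) (b := b)
      (c := (2*(i:ℝ)+1)/(2*(m:ℝ))) (h := 1/(2*(m:ℝ))) (by positivity)
    have eL : (2*(i:ℝ)+1)/(2*(m:ℝ)) - 1/(2*(m:ℝ)) = (i:ℝ)/(m:ℝ) := by field_simp; ring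
    have eR : (2*(i:ℝ)+1)/(2*(m:ℝ)) + 1/(2*(m:ℝ)) = ((i:ℝ)+1)/(m:ℝ) := by field_simp; ring
    rw [eL, eR] at key
    exact key
  refine key.trans (le_of_eq ?_)
  rw [← Finset.mul_sum, Finset.sum_add_distrib]
  have e1 : ∑ i ∈ Finset.range m, gfun a b ((i:ℝ)/(m:ℝ))
      = (∑ k ∈ Finset.range (m+1), gfun a b ((k:ℝ)/(m:ℝ))) - a := by rw [S1]; ring
  have e2 : ∑ i ∈ Finset.range m, gfun a b (((i:ℝ)+1)/(m:ℝ))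
      = (∑ k ∈ Finset.range (m+1), gfun a b ((k:ℝ)/(m:ℝ))) - b := by
    rw [S2]; push_cast; ring
  rw [e1, e2]
  field_simp
  ring

lemma scalar4 {a b : ℝ} (ha : 0 < a) (hb : 0 < b) (m : ℕ) (hm : 2 ≤ m) :
    (∑ k ∈ Finset.range (m+1), gfun a b ((k:ℝ)/(m:ℝ))) - (a+b)/2
      ≤ ∑ k ∈ Finset.range m, gfun a b ((k:ℝ)/((m:ℝ)-1)) := by
  obtain ⟨r, rfl⟩ : ∃ r, m = r + 2 := ⟨m - 2, by omega⟩
  set M : ℝ := ((r:ℕ):ℝ) + 2 with hMdef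
  have hM0 : (0:ℝ) < M := by positivity
  have hMcast : ((r + 2 : ℕ) : ℝ) = M := by push_cast [hMdef]; ring
  have hE : ((r + 2 : ℕ) : ℝ) - 1 = (r:ℝ) + 1 := by push_cast; ring
  have hE0 : (0:ℝ) < (r:ℝ) + 1 := by positivity
  set E : ℝ := (r:ℝ) + 1 with hEdef
  -- decompose LHS sum
  set f : ℕ → ℝ := fun k => gfun a b ((k:ℝ)/((r+2:ℕ):ℝ)) with hf
  set P : ℝ := ∑ k ∈ Finset.range (r+1), gfun a b (((k:ℝ)+1)/M) with hP
  have hLHS : ∑ k ∈ Finset.range (r+2+1), f k = b + (P + a) := by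
    rw [Finset.sum_range_succ' f (r+2)]
    have h0 : f 0 = b := by simp [hf, gfun_zero hb]
    have h1 : ∑ k ∈ Finset.range (r+2), f (k+1)
        = (∑ k ∈ Finset.range (r+1), f (k+1)) + f (r+2) := Finset.sum_range_succ _ (r+1)
    have h2 : f (r+2) = a := by
      simp only [hf, hMcast]
      rw [div_self hM0.ne', gfun_one ha]
    have h3 : ∀ k, f (k+1) = gfun a b (((k:ℝ)+1)/M) := by
      intro k; simp only [hf, hMcast]; push_cast; ring_nf
    rw [h1, h2, h0]
    have : ∑ k ∈ Finset.range (r+1), f (k+1) = P := by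
      rw [hP]; apply Finset.sum_congr rfl; intro k _; rw [h3]
    rw [this]; ring
  -- decompose RHS sum
  set q : ℕ → ℝ := fun k => gfun a b ((k:ℝ)/E) with hq
  set Q : ℝ := ∑ k ∈ Finset.range r, gfun a b (((k:ℝ)+1)/E) with hQ
  have hRHS : ∑ k ∈ Finset.range (r+2), q k = b + (Q + a) := by
    rw [Finset.sum_range_succ' q (r+1)]
    have h0 : q 0 = b := by simp [hq, gfun_zero hb]
    have h1 : ∑ k ∈ Finset.range (r+1), q (k+1)
        = (∑ k ∈ Finset.range r, q (k+1)) + q (r+1) := Finset.sum_range_succ _ r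
    have h2 : q (r+1) = a := by
      simp only [hq]
      rw [show ((r+1:ℕ):ℝ) = E by push_cast [hEdef]; ring, div_self hE0.ne', gfun_one ha]
    have h3 : ∀ k, q (k+1) = gfun a b (((k:ℝ)+1)/E) := by
      intro k; simp only [hq]; push_cast; ring_nf
    rw [h1, h2, h0]
    have : ∑ k ∈ Finset.range r, q (k+1) = Q := by
      rw [hQ]; apply Finset.sum_congr rfl; intro k _; rw [h3]
    rw [this]; ring
  -- convexity step : P ≤ R1 + R2
  have hconv : P ≤ ∑ k ∈ Finset.range (r+1),
      ((((k:ℝ)+1)/M) * gfun a b ((k:ℝ)/E) + ((M-((k:ℝ)+1))/M) * gfun a b (((k:ℝ)+1)/E)) := by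
    rw [hP]
    apply Finset.sum_le_sum
    intro k hk
    rw [Finset.mem_range] at hk
    have hkR : (k:ℝ) ≤ (r:ℝ) := by exact_mod_cast Nat.lt_succ_iff.mp hk
    have hθ1 : (0:ℝ) ≤ ((k:ℝ)+1)/M := by positivity
    have hθ2 : (0:ℝ) ≤ (M-((k:ℝ)+1))/M := by
      apply div_nonneg _ hM0.le
      rw [hMdef]; linarith
    have hθ12 : ((k:ℝ)+1)/M + (M-((k:ℝ)+1))/M = 1 := by field_simp; ring
    have harg : (((k:ℝ)+1)/M) * ((k:ℝ)/E) + ((M-((k:ℝ)+1))/M) * (((k:ℝ)+1)/E)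
        = ((k:ℝ)+1)/M := by
      rw [hMdef, hEdef]; field_simp; ring
    have := conv_combo ha hb (p := (k:ℝ)/E) (q := ((k:ℝ)+1)/E) hθ1 hθ2 hθ12
    rw [harg] at this
    exact this
  -- compute the RHS of hconv
  have hsplit : ∑ k ∈ Finset.range (r+1),
      ((((k:ℝ)+1)/M) * gfun a b ((k:ℝ)/E) + ((M-((k:ℝ)+1))/M) * gfun a b (((k:ℝ)+1)/E))
      = (∑ k ∈ Finset.range (r+1), ((((k:ℝ)+1)/M) * gfun a b ((k:ℝ)/E)))
        + ∑ k ∈ Finset.range (r+1), (((M-((k:ℝ)+1))/M) * gfun a b (((k:ℝ)+1)/E)) :=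
    Finset.sum_add_distrib
  have hR1 : ∑ k ∈ Finset.range (r+1), ((((k:ℝ)+1)/M) * gfun a b ((k:ℝ)/E))
      = (∑ k ∈ Finset.range r, ((((k:ℝ)+2)/M) * gfun a b (((k:ℝ)+1)/E))) + b/M := by
    rw [Finset.sum_range_succ' (fun k : ℕ => (((k:ℝ)+1)/M) * gfun a b ((k:ℝ)/E)) r]
    push_cast
    rw [zero_div, gfun_zero hb, zero_add]
    congr 1
    · apply Finset.sum_congr rfl; intro k _; ring_nf
    · ring
  have hR2 : ∑ k ∈ Finset.range (r+1), (((M-((k:ℝ)+1))/M) * gfun a b (((k:ℝ)+1)/E))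
      = (∑ k ∈ Finset.range r, (((M-((k:ℝ)+1))/M) * gfun a b (((k:ℝ)+1)/E))) + a/M := by
    rw [Finset.sum_range_succ (fun k : ℕ => ((M-((k:ℝ)+1))/M) * gfun a b (((k:ℝ)+1)/E)) r]
    congr 1
    rw [show ((r:ℝ)+1)/E = 1 by rw [hEdef]; field_simp, gfun_one ha,
      show M - ((r:ℝ)+1) = 1 by rw [hMdef]; ring]
    ring
  -- pairing bound for Q
  have hQbound : 2 * Q ≤ (r:ℝ) * (a+b) := by
    have href : ∑ k ∈ Finset.range r, gfun a b ((((r-1-k : ℕ):ℝ)+1)/E) = Q := by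
      rw [hQ]
      exact Finset.sum_range_reflect (fun k => gfun a b (((k:ℝ)+1)/E)) r
    have key : ∀ k ∈ Finset.range r,
        gfun a b (((k:ℝ)+1)/E) + gfun a b ((((r-1-k : ℕ):ℝ)+1)/E) ≤ a + b := by
      intro k hk
      rw [Finset.mem_range] at hk
      have hcast : (((r-1-k : ℕ):ℝ)+1) = (r:ℝ) - (k:ℝ) := by
        rw [show r-1-k = r - (1+k) by omega, Nat.cast_sub (by omega)]
        push_cast; ring
      have hx0 : (0:ℝ) ≤ ((k:ℝ)+1)/E := by positivity
      have hkr : (k:ℝ) + 1 ≤ (r:ℝ) := by exact_mod_cast Nat.succ_le_of_lt hk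
      have hx1 : ((k:ℝ)+1)/E ≤ 1 := by
        rw [div_le_one hE0, hEdef]; linarith
      have hcompl : 1 - ((k:ℝ)+1)/E = ((r:ℝ) - (k:ℝ))/E := by
        rw [hEdef]; field_simp; try ring
      have := gfun_pair_endpoints ha hb hx0 hx1
      rw [hcompl] at this
      rw [hcast]
      exact this
    have hsum := Finset.sum_le_sum key
    rw [Finset.sum_add_distrib, href, Finset.sum_const, Finset.card_range,
      nsmul_eq_mul] at hsum
    rw [hQ]
    linarith
  -- assemble
  have hMP : M * P ≤ (M+1) * Q + (a+b) := by
    have h1 : P ≤ (∑ k ∈ Finset.range r, (((M+1)/M) * gfun a b (((k:ℝ)+1)/E))) + (a+b)/M := by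
      have hco : ∀ k ∈ Finset.range r,
          (((k:ℝ)+2)/M) * gfun a b (((k:ℝ)+1)/E) + ((M-((k:ℝ)+1))/M) * gfun a b (((k:ℝ)+1)/E)
          = ((M+1)/M) * gfun a b (((k:ℝ)+1)/E) := by
        intro k _; ring
      calc P ≤ _ := hconv
        _ = _ := hsplit
        _ = (∑ k ∈ Finset.range r, (((M+1)/M) * gfun a b (((k:ℝ)+1)/E))) + (a+b)/M := by
            rw [hR1, hR2]
            have hcomb : (∑ k ∈ Finset.range r, (((k:ℝ)+2)/M) * gfun a b (((k:ℝ)+1)/E))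
                + (∑ k ∈ Finset.range r, ((M-((k:ℝ)+1))/M) * gfun a b (((k:ℝ)+1)/E))
                = ∑ k ∈ Finset.range r, (((M+1)/M) * gfun a b (((k:ℝ)+1)/E)) := by
              rw [← Finset.sum_add_distrib]
              exact Finset.sum_congr rfl hco
            linear_combination hcomb
    have h2 : (∑ k ∈ Finset.range r, (((M+1)/M) * gfun a b (((k:ℝ)+1)/E))) = ((M+1)/M) * Q := by
      rw [hQ, Finset.mul_sum]
    rw [h2] at h1
    have := mul_le_mul_of_nonneg_left h1 hM0.le
    calc M * P ≤ M * ((M+1)/M * Q + (a+b)/M) := this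
      _ = (M+1) * Q + (a+b) := by field_simp
  -- final arithmetic
  have hgoal : P + (a+b)/2 ≤ Q + a + b := by
    have hMP' : ((r:ℝ)+2) * P ≤ (((r:ℝ)+2)+1) * Q + (a+b) := by
      rw [← hMdef]; exact hMP
    have hr2 : (0:ℝ) < (r:ℝ) + 2 := by positivity
    rw [← mul_le_mul_iff_right₀ hr2]
    nlinarith [hMP', hQbound]
  calc (∑ k ∈ Finset.range (r+2+1), f k) - (a+b)/2 = b + (P + a) - (a+b)/2 := by rw [hLHS]
    _ ≤ b + (Q + a) := by linarith
    _ = ∑ k ∈ Finset.range (r+2), q k := hRHS.symm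
    _ = ∑ k ∈ Finset.range (r+2), gfun a b ((k:ℝ)/(((r+2:ℕ):ℝ)-1)) := by
        apply Finset.sum_congr rfl; intro k _
        rw [hq, hE]
noncomputable def sc {n : ℕ} (c : Fin n → Fin n → ℝ) (A : Matrix (Fin n) (Fin n) ℂ) :
    Matrix (Fin n) (Fin n) ℂ :=
  Matrix.of fun i j => ((c i j : ℝ) : ℂ) * A i j

lemma diag_sandwich {n : ℕ} (d e : Fin n → ℝ) (A : Matrix (Fin n) (Fin n) ℂ) :
    Matrix.diagonal (fun i => ((d i : ℝ) : ℂ)) * A * Matrix.diagonal (fun j => ((e j : ℝ) : ℂ))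
      = sc (fun i j => d i * e j) A := by
  ext i j
  simp [Matrix.mul_diagonal, Matrix.diagonal_mul, sc]
  push_cast
  ring

lemma frobNorm_eq_trace {n : ℕ} (M : Matrix (Fin n) (Fin n) ℂ) :
    frobNorm M = Real.sqrt ((Matrix.trace (Mᴴ * M)).re) := by
  rw [frobNorm]
  congr 1
  rw [Matrix.trace]
  simp only [Matrix.diag_apply, Matrix.mul_apply, Matrix.conjTranspose_apply]
  rw [Complex.re_sum]
  rw [Finset.sum_comm]
  apply Finset.sum_congr rfl
  intro i _
  rw [Complex.re_sum]
  apply Finset.sum_congr rfl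
  intro j _
  rw [Complex.sq_norm]
  rw [show star (M j i) * M j i = M j i * star (M j i) from mul_comm _ _]
  rw [RCLike.star_def, Complex.mul_conj]
  simp
lemma frob_unitary {n : ℕ} (U V : Matrix (Fin n) (Fin n) ℂ)
    (hU : U ∈ Matrix.unitaryGroup (Fin n) ℂ) (hV : V ∈ Matrix.unitaryGroup (Fin n) ℂ)
    (A : Matrix (Fin n) (Fin n) ℂ) :
    frobNorm (U * A * star V) = frobNorm A := by
  rw [frobNorm_eq_trace, frobNorm_eq_trace]
  have hU1 : star U * U = 1 := hU.1
  have hV1 : star V * V = 1 := hV.1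
  have h1 : (U * A * star V)ᴴ = V * (Aᴴ * star U) := by
    rw [Matrix.conjTranspose_mul, Matrix.conjTranspose_mul, ← Matrix.star_eq_conjTranspose U,
      ← Matrix.star_eq_conjTranspose (star V), star_star]
  have h2 : V * (Aᴴ * star U) * (U * A * star V) = V * (Aᴴ * A) * star V := by
    rw [Matrix.mul_assoc U A (star V)]
    calc V * (Aᴴ * star U) * (U * (A * star V))
        = V * (Aᴴ * (star U * U) * (A * star V)) := by
          simp only [Matrix.mul_assoc]
      _ = V * (Aᴴ * A) * star V := by
          rw [hU1, Matrix.mul_one]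
          simp only [Matrix.mul_assoc]
  rw [h1, h2, Matrix.trace_mul_cycle, hV1, Matrix.one_mul]

lemma frob_sc_mono {n : ℕ} (c c' : Fin n → Fin n → ℝ) (Y : Matrix (Fin n) (Fin n) ℂ)
    (h0 : ∀ i j, 0 ≤ c i j) (h : ∀ i j, c i j ≤ c' i j) :
    frobNorm (sc c Y) ≤ frobNorm (sc c' Y) := by
  rw [frobNorm, frobNorm]
  apply Real.sqrt_le_sqrt
  apply Finset.sum_le_sum
  intro i _
  apply Finset.sum_le_sum
  intro j _
  simp only [sc, Matrix.of_apply, norm_mul, Complex.norm_real, Real.norm_eq_abs, mul_pow]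
  have h0' : 0 ≤ c' i j := (h0 i j).trans (h i j)
  rw [abs_of_nonneg (h0 i j), abs_of_nonneg h0']
  exact mul_le_mul_of_nonneg_right (pow_le_pow_left₀ (h0 i j) (h i j) 2)
    (sq_nonneg (‖Y i j‖))

lemma sum_sc {n : ℕ} {ι : Type*} (s : Finset ι) (c : ι → Fin n → Fin n → ℝ)
    (Y : Matrix (Fin n) (Fin n) ℂ) :
    ∑ k ∈ s, sc (c k) Y = sc (fun i j => ∑ k ∈ s, c k i j) Y := by
  ext i j
  simp [sc, Finset.sum_apply, Matrix.sum_apply, Finset.sum_mul]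
lemma matPow_sandwich {n : ℕ} {S T : Matrix (Fin n) (Fin n) ℂ}
    (hS : S.IsHermitian) (hT : T.IsHermitian) (X : Matrix (Fin n) (Fin n) ℂ) (r s : ℝ) :
    matPow S hS r * X * matPow T hT s
      = (hS.eigenvectorUnitary : Matrix (Fin n) (Fin n) ℂ) *
          sc (fun i j => hS.eigenvalues i ^ r * hT.eigenvalues j ^ s)
            (star (hS.eigenvectorUnitary : Matrix (Fin n) (Fin n) ℂ) * X *
              (hT.eigenvectorUnitary : Matrix (Fin n) (Fin n) ℂ)) *
          star (hT.eigenvectorUnitary : Matrix (Fin n) (Fin n) ℂ) := by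
  rw [matPow, matPow,
    ← diag_sandwich (fun i => hS.eigenvalues i ^ r) (fun j => hT.eigenvalues j ^ s)]
  simp only [Matrix.mul_assoc]

lemma matPow_zero {n : ℕ} {T : Matrix (Fin n) (Fin n) ℂ} (hT : T.IsHermitian) :
    matPow T hT 0 = 1 := by
  rw [matPow]
  simp only [Real.rpow_zero, Complex.ofReal_one, Matrix.diagonal_one, Matrix.mul_one]
  have := (SetLike.coe_mem hT.eigenvectorUnitary).2
  norm_cast

lemma matPow_one {n : ℕ} {S : Matrix (Fin n) (Fin n) ℂ} (hS : S.IsHermitian) :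
    matPow S hS 1 = S := by
  have h : (fun i => ((hS.eigenvalues i ^ (1:ℝ) : ℝ) : ℂ))
      = (RCLike.ofReal ∘ hS.eigenvalues : Fin n → ℂ) := by
    funext i; simp [Real.rpow_one]
  rw [matPow, h]
  exact hS.spectral_theorem.symm

lemma sum_sc' {n : ℕ} {ι : Type*} (s : Finset ι) (c : ι → Fin n → Fin n → ℝ)
    (Y : Matrix (Fin n) (Fin n) ℂ) :
    ∑ k ∈ s, sc (c k) Y = sc (fun i j => ∑ k ∈ s, c k i j) Y := by
  ext i j
  simp [sc, Matrix.sum_apply, Finset.sum_mul]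

lemma sandwich_sum {n : ℕ} {ι : Type*} (s : Finset ι) (U V Y : Matrix (Fin n) (Fin n) ℂ)
    (c : ι → Fin n → Fin n → ℝ) :
    ∑ k ∈ s, (U * sc (c k) Y * star V)
      = U * sc (fun i j => ∑ k ∈ s, c k i j) Y * star V := by
  rw [← sum_sc', ← Matrix.sum_mul, ← Matrix.mul_sum]

lemma sc_smul {n : ℕ} (r : ℝ) (c : Fin n → Fin n → ℝ) (Y : Matrix (Fin n) (Fin n) ℂ) :
    ((r : ℝ) : ℂ) • sc c Y = sc (fun i j => r * c i j) Y := by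
  ext i j
  simp [sc, Matrix.smul_apply, smul_eq_mul]
  push_cast
  ring

lemma sandwich_smul {n : ℕ} (r : ℝ) (U V Y : Matrix (Fin n) (Fin n) ℂ)
    (c : Fin n → Fin n → ℝ) :
    ((r : ℝ) : ℂ) • (U * sc c Y * star V)
      = U * sc (fun i j => r * c i j) Y * star V := by
  rw [← smul_mul_assoc, ← mul_smul_comm, sc_smul]

lemma sandwich_sub {n : ℕ} (U V Y : Matrix (Fin n) (Fin n) ℂ) (c c' : Fin n → Fin n → ℝ) :
    U * sc c Y * star V - U * sc c' Y * star V
      = U * sc (fun i j => c i j - c' i j) Y * star V := by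
  have h : sc c Y - sc c' Y = sc (fun i j => c i j - c' i j) Y := by
    ext i j
    simp [sc, Matrix.sub_apply]
    push_cast
    ring
  rw [← h, Matrix.mul_sub, Matrix.sub_mul]

lemma sandwich_add {n : ℕ} (U V Y : Matrix (Fin n) (Fin n) ℂ) (c c' : Fin n → Fin n → ℝ) :
    U * sc c Y * star V + U * sc c' Y * star V
      = U * sc (fun i j => c i j + c' i j) Y * star V := by
  have h : sc c Y + sc c' Y = sc (fun i j => c i j + c' i j) Y := by
    ext i j
    simp [sc, Matrix.add_apply]
    push_cast
    ring
  rw [← h, Matrix.mul_add, Matrix.add_mul]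


set_option maxHeartbeats 1000000 in
open MeasureTheory in
lemma sandwich_integral {n : ℕ} (U V Y : Matrix (Fin n) (Fin n) ℂ) (lam mu : Fin n → ℝ)
    (hlam : ∀ i, 0 < lam i) (hmu : ∀ j, 0 < mu j) :
    (∫ ν in (0:ℝ)..1, U * sc (fun i j => lam i ^ ν * mu j ^ (1 - ν)) Y * star V)
      = U * sc (fun i j => ∫ ν in (0:ℝ)..1, gfun (lam i) (mu j) ν) Y * star V := by
  classical
  have hdecomp : ∀ (c : Fin n → Fin n → ℝ), U * sc c Y * star V
      = ∑ p : Fin n × Fin n, c p.1 p.2 •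
          (U * sc (fun i j => if i = p.1 ∧ j = p.2 then 1 else 0) Y * star V) := by
    intro c
    have h1 : sc c Y = ∑ p : Fin n × Fin n,
        c p.1 p.2 • sc (fun i j => if i = p.1 ∧ j = p.2 then 1 else 0) Y := by
      ext i j
      rw [Matrix.sum_apply]
      rw [Finset.sum_eq_single (i, j)]
      · simp [sc, Complex.real_smul]
      · intro p _ hp
        have : ¬ (i = p.1 ∧ j = p.2) := by
          rintro ⟨h1, h2⟩; exact hp (by rw [Prod.ext_iff]; exact ⟨h1.symm, h2.symm⟩)
        simp [sc, this]
      · intro h; exact absurd (Finset.mem_univ _) h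
    calc U * sc c Y * star V
        = U * (∑ p : Fin n × Fin n,
            c p.1 p.2 • sc (fun i j => if i = p.1 ∧ j = p.2 then 1 else 0) Y) * star V := by
          rw [← h1]
      _ = _ := by
          rw [Matrix.mul_sum, Matrix.sum_mul]
          apply Finset.sum_congr rfl
          intro p _
          rw [mul_smul_comm, smul_mul_assoc]
  have hfun : ∀ ν : ℝ, U * sc (fun i j => lam i ^ ν * mu j ^ (1 - ν)) Y * star V
      = ∑ p : Fin n × Fin n, gfun (lam p.1) (mu p.2) ν •
          (U * sc (fun i j => if i = p.1 ∧ j = p.2 then 1 else 0) Y * star V) := by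
    intro ν
    exact hdecomp _
  calc (∫ ν in (0:ℝ)..1, U * sc (fun i j => lam i ^ ν * mu j ^ (1 - ν)) Y * star V)
      = ∫ ν in (0:ℝ)..1, ∑ p : Fin n × Fin n, gfun (lam p.1) (mu p.2) ν •
          (U * sc (fun i j => if i = p.1 ∧ j = p.2 then 1 else 0) Y * star V) := by
        simp only [hfun]
    _ = ∑ p : Fin n × Fin n, (∫ ν in (0:ℝ)..1, gfun (lam p.1) (mu p.2) ν) •
          (U * sc (fun i j => if i = p.1 ∧ j = p.2 then 1 else 0) Y * star V) := by
        rw [intervalIntegral.integral_finset_sum]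
        · apply Finset.sum_congr rfl
          intro p _
          exact intervalIntegral.integral_smul_const _ _
        · intro p _
          exact ((gfun_cont (hlam p.1) (hmu p.2)).smul continuous_const).intervalIntegrable _ _
    _ = U * sc (fun i j => ∫ ν in (0:ℝ)..1, gfun (lam i) (mu j) ν) Y * star V := by
        exact (hdecomp (fun i j => ∫ ν in (0:ℝ)..1, gfun (lam i) (mu j) ν)).symm

end helperdev

open MeasureTheory in
theorem statement13 (n m₁ m₂ : ℕ) (hm₁ : 1 ≤ m₁) (hm₂ : 2 ≤ m₂)
    (S T X : Matrix (Fin n) (Fin n) ℂ) (hS : S.PosDef) (hT : T.PosDef) :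
    frobNorm ((1 / (m₁ : ℂ)) • ∑ k ∈ Finset.Icc 1 m₁,
        matPow S hS.1 ((k : ℝ) / ((m₁ : ℝ) + 1)) * X *
          matPow T hT.1 (((m₁ : ℝ) + 1 - (k : ℝ)) / ((m₁ : ℝ) + 1)))
      ≤ frobNorm ((1 / (m₁ : ℂ)) • ∑ k ∈ Finset.Icc 1 m₁,
        matPow S hS.1 ((2 * (k : ℝ) - 1) / (2 * (m₁ : ℝ))) * X *
          matPow T hT.1 ((2 * (m₁ : ℝ) - 2 * (k : ℝ) + 1) / (2 * (m₁ : ℝ)))) ∧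
    frobNorm ((1 / (m₁ : ℂ)) • ∑ k ∈ Finset.Icc 1 m₁,
        matPow S hS.1 ((2 * (k : ℝ) - 1) / (2 * (m₁ : ℝ))) * X *
          matPow T hT.1 ((2 * (m₁ : ℝ) - 2 * (k : ℝ) + 1) / (2 * (m₁ : ℝ))))
      ≤ frobNorm (∫ ν in (0:ℝ)..1, matPow S hS.1 ν * X * matPow T hT.1 (1 - ν)) ∧
    frobNorm (∫ ν in (0:ℝ)..1, matPow S hS.1 ν * X * matPow T hT.1 (1 - ν))
      ≤ frobNorm ((1 / (m₂ : ℂ)) • ((∑ k ∈ Finset.range (m₂ + 1),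
          matPow S hS.1 ((k : ℝ) / (m₂ : ℝ)) * X *
            matPow T hT.1 (((m₂ : ℝ) - (k : ℝ)) / (m₂ : ℝ)))
        - (1 / 2 : ℂ) • (S * X + X * T))) ∧
    frobNorm ((1 / (m₂ : ℂ)) • ((∑ k ∈ Finset.range (m₂ + 1),
          matPow S hS.1 ((k : ℝ) / (m₂ : ℝ)) * X *
            matPow T hT.1 (((m₂ : ℝ) - (k : ℝ)) / (m₂ : ℝ)))
        - (1 / 2 : ℂ) • (S * X + X * T)))
      ≤ frobNorm ((1 / (m₂ : ℂ)) • ∑ k ∈ Finset.range m₂,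
          matPow S hS.1 ((k : ℝ) / ((m₂ : ℝ) - 1)) * X *
            matPow T hT.1 (((m₂ : ℝ) - 1 - (k : ℝ)) / ((m₂ : ℝ) - 1))) := by
  classical
  have hUm : ((hS.1.eigenvectorUnitary : Matrix (Fin n) (Fin n) ℂ))
      ∈ Matrix.unitaryGroup (Fin n) ℂ := SetLike.coe_mem _
  have hVm : ((hT.1.eigenvectorUnitary : Matrix (Fin n) (Fin n) ℂ))
      ∈ Matrix.unitaryGroup (Fin n) ℂ := SetLike.coe_mem _
  have hlam : ∀ i, 0 < hS.1.eigenvalues i := fun i => hS.eigenvalues_pos i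
  have hmu : ∀ j, 0 < hT.1.eigenvalues j := fun j => hT.eigenvalues_pos j
  have hm₁R : (1:ℝ) ≤ (m₁:ℝ) := by exact_mod_cast hm₁
  have hm₂R : (2:ℝ) ≤ (m₂:ℝ) := by exact_mod_cast hm₂
  have hm₁0 : (0:ℝ) < (m₁:ℝ) := by linarith
  have hm₂0 : (0:ℝ) < (m₂:ℝ) := by linarith
  have hm₁1 : ((m₁:ℝ) + 1) ≠ 0 := by positivity
  have hm₂n : (m₂:ℝ) ≠ 0 := hm₂0.ne'
  have hm₂1 : ((m₂:ℝ) - 1) ≠ 0 := by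
    intro h; rw [sub_eq_zero] at h; rw [h] at hm₂R; norm_num at hm₂R
  have hc₁ : (1/(m₁:ℂ)) = (((1/(m₁:ℝ)):ℝ):ℂ) := by push_cast; ring
  have hc₂ : (1/(m₂:ℂ)) = (((1/(m₂:ℝ)):ℝ):ℂ) := by push_cast; ring
  have haddfull : S * X + X * T
      = (hS.1.eigenvectorUnitary : Matrix (Fin n) (Fin n) ℂ) *
          sc (fun i j => hS.1.eigenvalues i ^ (1:ℝ) * hT.1.eigenvalues j ^ (0:ℝ)
              + hS.1.eigenvalues i ^ (0:ℝ) * hT.1.eigenvalues j ^ (1:ℝ))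
            (star (hS.1.eigenvectorUnitary : Matrix (Fin n) (Fin n) ℂ) * X *
              (hT.1.eigenvectorUnitary : Matrix (Fin n) (Fin n) ℂ)) *
          star (hT.1.eigenvectorUnitary : Matrix (Fin n) (Fin n) ℂ) := by
    have e1 : S * X = matPow S hS.1 1 * X * matPow T hT.1 0 := by
      rw [matPow_one hS.1, matPow_zero hT.1, Matrix.mul_one]
    have e2 : X * T = matPow S hS.1 0 * X * matPow T hT.1 1 := by
      rw [matPow_one hT.1, matPow_zero hS.1, Matrix.one_mul]
    rw [e1, e2, matPow_sandwich hS.1 hT.1, matPow_sandwich hS.1 hT.1, sandwich_add]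
  simp only [matPow_sandwich hS.1 hT.1 X]
  rw [haddfull]
  rw [show (1/2:ℂ) = (((1/2:ℝ):ℝ):ℂ) from by norm_num, sandwich_smul]
  simp only [sandwich_sum]
  rw [sandwich_integral _ _ _ hS.1.eigenvalues hT.1.eigenvalues hlam hmu]
  simp only [sandwich_sub]
  rw [hc₁, hc₂]
  simp only [sandwich_smul]
  simp only [frob_unitary _ _ hUm hVm]
  -- scalar conversions
  have conv1 : ∀ i j : Fin n, 1/(m₁:ℝ) * (∑ k ∈ Finset.Icc 1 m₁,
        hS.1.eigenvalues i ^ ((k:ℝ)/((m₁:ℝ)+1))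
          * hT.1.eigenvalues j ^ (((m₁:ℝ)+1-(k:ℝ))/((m₁:ℝ)+1)))
      = 1/(m₁:ℝ) * ∑ k ∈ Finset.Icc 1 m₁,
          gfun (hS.1.eigenvalues i) (hT.1.eigenvalues j) ((k:ℝ)/((m₁:ℝ)+1)) := by
    intro i j
    congr 1
    refine Finset.sum_congr rfl fun k _ => gfun_eq ?_
    field_simp
    ring
  have conv2 : ∀ i j, (1/(m₁:ℝ)) * (∑ k ∈ Finset.Icc 1 m₁,
        hS.1.eigenvalues i ^ ((2*(k:ℝ)-1)/(2*(m₁:ℝ)))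
          * hT.1.eigenvalues j ^ ((2*(m₁:ℝ)-2*(k:ℝ)+1)/(2*(m₁:ℝ))))
      = 1/(m₁:ℝ) * ∑ k ∈ Finset.Icc 1 m₁,
          gfun (hS.1.eigenvalues i) (hT.1.eigenvalues j) ((2*(k:ℝ)-1)/(2*(m₁:ℝ))) := by
    intro i j
    congr 1
    refine Finset.sum_congr rfl fun k _ => gfun_eq ?_
    field_simp
    try ring
  have conv3 : ∀ i j, (∑ k ∈ Finset.range (m₂+1),
        hS.1.eigenvalues i ^ ((k:ℝ)/(m₂:ℝ))
          * hT.1.eigenvalues j ^ (((m₂:ℝ)-(k:ℝ))/(m₂:ℝ)))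
      = ∑ k ∈ Finset.range (m₂+1),
          gfun (hS.1.eigenvalues i) (hT.1.eigenvalues j) ((k:ℝ)/(m₂:ℝ)) := by
    intro i j
    refine Finset.sum_congr rfl fun k _ => gfun_eq ?_
    field_simp
    ring
  have convhalf : ∀ i j, (1/2:ℝ) * (hS.1.eigenvalues i ^ (1:ℝ) * hT.1.eigenvalues j ^ (0:ℝ)
        + hS.1.eigenvalues i ^ (0:ℝ) * hT.1.eigenvalues j ^ (1:ℝ))
      = (hS.1.eigenvalues i + hT.1.eigenvalues j)/2 := by
    intro i j
    rw [Real.rpow_one, Real.rpow_zero, Real.rpow_one, Real.rpow_zero]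
    ring
  have conv4 : ∀ i j, (∑ k ∈ Finset.range m₂,
        hS.1.eigenvalues i ^ ((k:ℝ)/((m₂:ℝ)-1))
          * hT.1.eigenvalues j ^ (((m₂:ℝ)-1-(k:ℝ))/((m₂:ℝ)-1)))
      = ∑ k ∈ Finset.range m₂,
          gfun (hS.1.eigenvalues i) (hT.1.eigenvalues j) ((k:ℝ)/((m₂:ℝ)-1)) := by
    intro i j
    refine Finset.sum_congr rfl fun k _ => gfun_eq ?_
    field_simp
    ring
  have hCLnonneg : ∀ i j, 0 ≤ ∫ ν in (0:ℝ)..1,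
      gfun (hS.1.eigenvalues i) (hT.1.eigenvalues j) ν := by
    intro i j
    apply intervalIntegral.integral_nonneg (by norm_num)
    intro x _
    exact (gfun_pos (hlam i) (hmu j) x).le
  have hC2nonneg : ∀ i j : Fin n, 0 ≤ 1/(m₁:ℝ) * ∑ k ∈ Finset.Icc 1 m₁,
      hS.1.eigenvalues i ^ ((2*(k:ℝ)-1)/(2*(m₁:ℝ)))
        * hT.1.eigenvalues j ^ ((2*(m₁:ℝ)-2*(k:ℝ)+1)/(2*(m₁:ℝ))) := by
    intro i j
    apply mul_nonneg (by positivity)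
    exact Finset.sum_nonneg fun k _ => mul_nonneg (Real.rpow_nonneg (hlam i).le _)
      (Real.rpow_nonneg (hmu j).le _)
  have hC3 : ∀ i j : Fin n, (∫ ν in (0:ℝ)..1,
        gfun (hS.1.eigenvalues i) (hT.1.eigenvalues j) ν)
      ≤ 1/(m₂:ℝ) * ((∑ k ∈ Finset.range (m₂+1),
          hS.1.eigenvalues i ^ ((k:ℝ)/(m₂:ℝ))
            * hT.1.eigenvalues j ^ (((m₂:ℝ)-(k:ℝ))/(m₂:ℝ)))
        - (1/2:ℝ) * (hS.1.eigenvalues i ^ (1:ℝ) * hT.1.eigenvalues j ^ (0:ℝ)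
            + hS.1.eigenvalues i ^ (0:ℝ) * hT.1.eigenvalues j ^ (1:ℝ))) := by
    intro i j
    rw [conv3 i j, convhalf i j]
    exact scalar3 (hlam i) (hmu j) m₂ (by omega)
  refine ⟨?_, ?_, ?_, ?_⟩
  · apply frob_sc_mono
    · intro i j
      beta_reduce
      apply mul_nonneg (by positivity)
      exact Finset.sum_nonneg fun k _ => mul_nonneg (Real.rpow_nonneg (hlam i).le _)
        (Real.rpow_nonneg (hmu j).le _)
    · intro i j
      beta_reduce
      rw [conv1 i j, conv2 i j]
      exact mul_le_mul_of_nonneg_left (scalar1 (hlam i) (hmu j) m₁ hm₁) (by positivity)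
  · apply frob_sc_mono
    · intro i j
      beta_reduce
      exact hC2nonneg i j
    · intro i j
      beta_reduce
      rw [conv2 i j]
      exact scalar2 (hlam i) (hmu j) m₁ hm₁
  · apply frob_sc_mono
    · intro i j
      beta_reduce
      exact hCLnonneg i j
    · intro i j
      beta_reduce
      exact hC3 i j
  · apply frob_sc_mono
    · intro i j
      beta_reduce
      exact (hCLnonneg i j).trans (hC3 i j)
    · intro i j
      beta_reduce
      rw [conv3 i j, convhalf i j, conv4 i j]
      exact mul_le_mul_of_nonneg_left (scalar4 (hlam i) (hmu j) m₂ hm₂) (by positivity)
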